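/- arXiv:1803.05966 — 3 statements merged into one kernel-verified Lean document; each statement's English description precedes it below -/
import Mathlib

section
/- For any set C of code words and any shift-invariant Borel probability measure μ on the coded subshift X_C, the set X_C \ (L_C ∪ B_C) has μ-measure zero. -/
open Filter Topology MeasureTheory

variable {A : Type*}

/-- The left shift on bi-infinite sequences. -/
def shift (x : ℤ → A) : ℤ → A := fun n => x (n + 1)

/-- The word `x([i, i+n))` read off from a point `x`. -/
def wordAt (x : ℤ → A) (i : ℤ) (n : ℕ) : List A :=
  (List.range n).map fun j => x (i + j)

/-- A subshift: a closed, shift-invariant subset of the full shift. -/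
def IsSubshift [TopologicalSpace A] (X : Set (ℤ → A)) : Prop :=
  IsClosed X ∧ ∀ x ∈ X, shift x ∈ X

/-- The set of words of length `n` appearing in points of `X`. -/
def language (X : Set (ℤ → A)) (n : ℕ) : Set (List A) :=
  {w | ∃ x ∈ X, ∃ i : ℤ, wordAt x i n = w}

/-- Topological entropy of a subshift, as a limsup. -/
noncomputable def entropy (X : Set (ℤ → A)) : ℝ :=
  Filter.limsup (fun n : ℕ => Real.log ((language X n).ncard) / n) Filter.atTop

/-- The set `C_n` of code words of length `n`. -/
def Cwords (C : Set (List A)) (n : ℕ) : Set (List A) := {w ∈ C | w.length = n}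

/-- The generating function `f_C(α) = ∑_{j ≥ 1} |C_j| e^{-jα}`, valued in `[0, ∞]`. -/
noncomputable def fC (C : Set (List A)) (α : ℝ) : ENNReal :=
  ∑' n : ℕ, ((Cwords C (n + 1)).ncard : ENNReal) *
    ENNReal.ofReal (Real.exp (-((n : ℝ) + 1) * α))

/-- The set `B_C` of bi-infinite concatenations of code words. -/
def Bset (C : Set (List A)) : Set (ℤ → A) :=
  {x | ∃ s : ℤ → ℤ, StrictMono s ∧ Tendsto s atTop atTop ∧ Tendsto s atBot atBot ∧
    ∀ k : ℤ, wordAt x (s k) (s (k + 1) - s k).toNat ∈ C}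

/-- The set `L_C` of limits of single code words. -/
def Lset (C : Set (List A)) : Set (ℤ → A) :=
  {x | ∀ k : ℕ, ∃ w ∈ C, wordAt x (-(k : ℤ)) (2 * k + 1) <:+: w}

/-- The coded subshift `X_C`, the closure of `B_C`. -/
def Xset [TopologicalSpace A] (C : Set (List A)) : Set (ℤ → A) := closure (Bset C)

/-- `C` has unique decomposition: no finite word is a concatenation of `C`-words
in two different ways. -/
def UniqueDecomposition (C : Set (List A)) : Prop :=
  ∀ l l' : List (List A), (∀ w ∈ l, w ∈ C) → (∀ w ∈ l', w ∈ C) →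
    l.flatten = l'.flatten → l = l'

/-- `n`-letter prefixes of words in `C`. -/
def Pn (C : Set (List A)) (n : ℕ) : Set (List A) :=
  {w | w.length = n ∧ ∃ v ∈ C, w <+: v}

/-- `n`-letter suffixes of words in `C`. -/
def Sn (C : Set (List A)) (n : ℕ) : Set (List A) :=
  {w | w.length = n ∧ ∃ v ∈ C, w <:+ v}

/-- `n`-letter subwords of words in `C`. -/
def Wn (C : Set (List A)) (n : ℕ) : Set (List A) :=
  {w | w.length = n ∧ ∃ v ∈ C, w <:+: v}

/-- The measure of the cylinder set of a word. -/
noncomputable def cylMeasure [MeasurableSpace A] (μ : Measure (ℤ → A)) (w : List A) : ℝ :=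
  (μ {x : ℤ → A | wordAt x 0 w.length = w}).toReal

/-- Measure-theoretic (Kolmogorov–Sinai) entropy of a shift-invariant measure. -/
noncomputable def measEntropy [MeasurableSpace A] [Fintype A] [DecidableEq A]
    (μ : Measure (ℤ → A)) : ℝ :=
  Filter.limsup (fun n : ℕ =>
    (-1 / (n : ℝ)) * ∑ w : Fin n → A,
      cylMeasure μ (List.ofFn w) * Real.log (cylMeasure μ (List.ofFn w))) Filter.atTop

/-- The inverse shift. -/
def shiftInv (x : ℤ → A) : ℤ → A := fun n => x (n - 1)

lemma wordAt_eq (x : ℤ → A) (i : ℤ) (n : ℕ) :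
    wordAt x i n = (List.range n).map (fun j : ℕ => x (i + (j:ℤ))) := by
  unfold wordAt
  simp only [List.pure_def, List.bind_eq_flatMap, ← List.map_eq_flatMap, List.map_map]
  rfl

lemma wordAt_append (x : ℤ → A) (i : ℤ) (m n : ℕ) :
    wordAt x i (m + n) = wordAt x i m ++ wordAt x (i + m) n := by
  simp only [wordAt_eq, List.range_add, List.map_append, List.map_map]
  congr 1
  apply List.map_congr_left
  intro a _
  simp only [Function.comp_apply]
  congr 1
  push_cast
  ring

lemma wordAt_congr {x y : ℤ → A} {i : ℤ} {n : ℕ}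
    (h : ∀ j : ℤ, i ≤ j → j < i + n → x j = y j) :
    wordAt x i n = wordAt y i n := by
  rw [wordAt_eq, wordAt_eq]
  apply List.map_congr_left
  intro a ha
  rw [List.mem_range] at ha
  exact h _ (by omega) (by omega)

lemma wordAt_infix (x : ℤ → A) {i i' : ℤ} {n n' : ℕ}
    (h1 : i' ≤ i) (h2 : i + n ≤ i' + n') :
    wordAt x i n <:+: wordAt x i' n' := by
  have ha : ((i - i').toNat : ℤ) = i - i' := Int.toNat_of_nonneg (by omega)
  have hb : ((i' + n' - (i + n)).toNat : ℤ) = i' + n' - (i + n) := Int.toNat_of_nonneg (by omega)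
  refine ⟨wordAt x i' (i - i').toNat, wordAt x (i + n) (i' + n' - (i + n)).toNat, ?_⟩
  have hn' : n' = (i - i').toNat + (n + (i' + n' - (i + n)).toNat) := by omega
  rw [List.append_assoc]
  conv_rhs => rw [hn']
  rw [wordAt_append x i' ((i - i').toNat) (n + (i' + n' - (i + n)).toNat)]
  have hi : i' + ((i - i').toNat : ℤ) = i := by omega
  rw [hi, wordAt_append]

lemma shift_iterate (x : ℤ → A) (n : ℕ) (m : ℤ) : (shift^[n] x) m = x (m + n) := by
  induction n generalizing x with
  | zero => simp
  | succ n ih =>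
    rw [Function.iterate_succ_apply, ih (shift x)]
    show x (m + n + 1) = x (m + (n + 1 : ℕ))
    congr 1
    push_cast
    ring

lemma shiftInv_iterate (x : ℤ → A) (n : ℕ) (m : ℤ) : (shiftInv^[n] x) m = x (m - n) := by
  induction n generalizing x with
  | zero => simp
  | succ n ih =>
    rw [Function.iterate_succ_apply, ih (shiftInv x)]
    show x (m - n - 1) = x (m - (n + 1 : ℕ))
    congr 1
    push_cast
    ring

lemma wordAt_shift_iterate (x : ℤ → A) (n : ℕ) (i : ℤ) (L : ℕ) :
    wordAt (shift^[n] x) i L = wordAt x (i + n) L := by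
  rw [wordAt_eq, wordAt_eq]
  apply List.map_congr_left
  intro a _
  rw [shift_iterate]
  congr 1
  ring

lemma wordAt_shiftInv_iterate (x : ℤ → A) (n : ℕ) (i : ℤ) (L : ℕ) :
    wordAt (shiftInv^[n] x) i L = wordAt x (i - n) L := by
  rw [wordAt_eq, wordAt_eq]
  apply List.map_congr_left
  intro a _
  rw [shiftInv_iterate]
  congr 1
  ring

lemma strictMono_add_nat {s : ℤ → ℤ} (hs : StrictMono s) (a : ℤ) (n : ℕ) :
    s a + n ≤ s (a + n) := by
  induction n with
  | zero => simp
  | succ n ih =>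
    have h1 : s (a + n) < s (a + n + 1) := hs (by omega)
    have h2 : a + ((n : ℤ) + 1) = a + n + 1 := by ring
    push_cast
    rw [h2]
    push_cast at ih
    omega

lemma strictMono_int_tendsto_atTop {s : ℤ → ℤ} (hs : StrictMono s) :
    Tendsto s atTop atTop := by
  rw [tendsto_atTop]
  intro b
  rw [eventually_atTop]
  refine ⟨max 0 (b - s 0), fun z hz => ?_⟩
  have hz0 : 0 ≤ z := le_trans (le_max_left _ _) hz
  have := strictMono_add_nat hs 0 z.toNat
  have h1 : ((z.toNat : ℤ)) = z := Int.toNat_of_nonneg hz0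
  rw [zero_add, h1] at this
  have : b - s 0 ≤ z := le_trans (le_max_right _ _) hz
  omega

lemma strictMono_int_tendsto_atBot {s : ℤ → ℤ} (hs : StrictMono s) :
    Tendsto s atBot atBot := by
  rw [tendsto_atBot]
  intro b
  rw [eventually_atBot]
  refine ⟨min 0 (b - s 0), fun z hz => ?_⟩
  have hz0 : z ≤ 0 := le_trans hz (min_le_left _ _)
  have := strictMono_add_nat hs z (-z).toNat
  have h1 : ((( -z).toNat : ℤ)) = -z := Int.toNat_of_nonneg (by omega)
  rw [h1] at this
  have h2 : z + -z = 0 := by ring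
  rw [h2] at this
  have : z ≤ b - s 0 := le_trans hz (min_le_right _ _)
  omega

lemma exists_boundary {C : Set (List A)} {y : ℤ → A} {s : ℤ → ℤ}
    (hmono : StrictMono s) (hbot : Tendsto s atBot atBot)
    (hword : ∀ k : ℤ, wordAt y (s k) (s (k + 1) - s k).toNat ∈ C)
    {n : ℤ} {k : ℕ} (hno : ∀ w ∈ C, ¬ wordAt y (n - k) (2 * k + 1) <:+: w) :
    ∃ j : ℤ, n - k < s j ∧ s j ≤ n + k + 1 := by
  obtain ⟨j0, hj0⟩ := (hbot.eventually (eventually_le_atBot (n - k))).exists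
  have Hbdd : ∃ b : ℤ, ∀ z, s z ≤ n - k → z ≤ b := by
    refine ⟨max 0 (n - k - s 0), fun z hz => ?_⟩
    rcases le_or_gt z 0 with h | h
    · exact le_trans h (le_max_left _ _)
    · have h1 := strictMono_add_nat hmono 0 z.toNat
      have h2 : ((z.toNat : ℤ)) = z := Int.toNat_of_nonneg h.le
      rw [zero_add, h2] at h1
      have : z ≤ n - k - s 0 := by omega
      exact le_trans this (le_max_right _ _)
  obtain ⟨j, hj, hjmax⟩ := Int.exists_greatest_of_bdd Hbdd ⟨j0, hj0⟩
  have hj1 : n - k < s (j + 1) := by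
    by_contra h
    push_neg at h
    have := hjmax (j + 1) h
    omega
  by_cases hcase : s (j + 1) ≤ n + k + 1
  · exact ⟨j + 1, hj1, hcase⟩
  · exfalso
    push_neg at hcase
    refine hno (wordAt y (s j) (s (j + 1) - s j).toNat) (hword j) ?_
    have hlt : s j < s (j + 1) := hmono (by omega)
    have htn : ((s (j + 1) - s j).toNat : ℤ) = s (j + 1) - s j :=
      Int.toNat_of_nonneg (by omega)
    refine wordAt_infix y hj ?_
    push_cast
    omega

lemma gap_word {C : Set (List A)} {y : ℤ → A} {s : ℤ → ℤ}
    (hmono : StrictMono s)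
    (hword : ∀ k : ℤ, wordAt y (s k) (s (k + 1) - s k).toNat ∈ C)
    {p p' : ℤ} (hp : p ∈ Set.range s) (hp' : p' ∈ Set.range s) (hlt : p < p')
    (hbetween : ∀ q ∈ Set.range s, ¬ (p < q ∧ q < p')) :
    wordAt y p (p' - p).toNat ∈ C := by
  obtain ⟨a, rfl⟩ := hp
  obtain ⟨b, rfl⟩ := hp'
  have hab : a < b := hmono.lt_iff_lt.mp hlt
  have hb : b = a + 1 := by
    by_contra h
    have h1 : a + 1 < b := by omega
    exact hbetween (s (a + 1)) ⟨a + 1, rfl⟩ ⟨hmono (by omega), hmono h1⟩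
  subst hb
  exact hword a

lemma closure_approx [TopologicalSpace A] [DiscreteTopology A] {B : Set (ℤ → A)} {x : ℤ → A}
    (hx : x ∈ closure B) (F : Finset ℤ) : ∃ y ∈ B, ∀ i ∈ F, y i = x i := by
  have hU : IsOpen {y : ℤ → A | ∀ i ∈ F, y i = x i} := by
    have he : {y : ℤ → A | ∀ i ∈ F, y i = x i} = Set.pi (F : Set ℤ) (fun i => {x i}) := by
      ext y
      simp [Set.mem_pi]
    rw [he]
    exact isOpen_set_pi F.finite_toSet (fun i _ => isOpen_discrete _)
  rcases mem_closure_iff.1 hx _ hU (fun i _ => rfl) with ⟨y, hy1, hy2⟩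
  exact ⟨y, hy2, hy1⟩

lemma build_mem_Bset {C : Set (List A)} {x : ℤ → A} (T : ℤ → Prop)
    (hup : ∀ B : ℤ, ∃ q, T q ∧ B < q)
    (hdown : ∀ B : ℤ, ∃ q, T q ∧ q < B)
    (hgap : ∀ p p', T p → T p' → p < p' → (∀ q, T q → ¬(p < q ∧ q < p')) →
      wordAt x p (p' - p).toNat ∈ C) :
    x ∈ Bset C := by
  classical
  have hnext : ∀ p : ℤ, ∃ q, (T q ∧ p < q) ∧ ∀ r, (T r ∧ p < r) → q ≤ r := by
    intro p
    apply Int.exists_least_of_bdd (P := fun q => T q ∧ p < q)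
    · exact ⟨p, fun z hz => hz.2.le⟩
    · obtain ⟨q, hq1, hq2⟩ := hup p
      exact ⟨q, hq1, hq2⟩
  have hprev : ∀ p : ℤ, ∃ q, (T q ∧ q < p) ∧ ∀ r, (T r ∧ r < p) → r ≤ q := by
    intro p
    apply Int.exists_greatest_of_bdd (P := fun q => T q ∧ q < p)
    · exact ⟨p, fun z hz => hz.2.le⟩
    · obtain ⟨q, hq1, hq2⟩ := hdown p
      exact ⟨q, hq1, hq2⟩
  choose nxt hnT hnmin using hnext
  choose prv hpT hpmax using hprev
  obtain ⟨p₀, hp₀, _⟩ := hup 0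
  set f : ℕ → ℤ := fun n => nxt^[n] p₀ with hf
  set g : ℕ → ℤ := fun n => prv^[n] p₀ with hg
  have hfT : ∀ n, T (f n) := by
    intro n
    induction n with
    | zero => simpa [hf] using hp₀
    | succ n ih =>
      have : f (n + 1) = nxt (f n) := Function.iterate_succ_apply' nxt n p₀
      rw [this]
      exact (hnT (f n)).1
  have hgT : ∀ n, T (g n) := by
    intro n
    induction n with
    | zero => simpa [hg] using hp₀
    | succ n ih =>
      have : g (n + 1) = prv (g n) := Function.iterate_succ_apply' prv n p₀
      rw [this]
      exact (hpT (g n)).1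
  have hfs : ∀ n, f (n + 1) = nxt (f n) := fun n => Function.iterate_succ_apply' nxt n p₀
  have hgs : ∀ n, g (n + 1) = prv (g n) := fun n => Function.iterate_succ_apply' prv n p₀
  set s : ℤ → ℤ := fun z => if 0 ≤ z then f z.toNat else g (-z).toNat with hs
  have hsf : ∀ z : ℤ, 0 ≤ z → s z = f z.toNat := by
    intro z hz
    simp [hs, hz]
  have hsg : ∀ z : ℤ, z ≤ 0 → s z = g (-z).toNat := by
    intro z hz
    rcases eq_or_lt_of_le hz with h | h
    · subst h
      simp [hs, hf, hg]
    · simp [hs, not_le.2 h]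
  have hstep : ∀ z : ℤ, (s z < s (z + 1)) ∧ ∀ q, T q → ¬(s z < q ∧ q < s (z + 1)) := by
    intro z
    rcases le_or_gt 0 z with hz | hz
    · have h1 : s z = f z.toNat := hsf z hz
      have h2 : s (z + 1) = f (z + 1).toNat := hsf (z + 1) (by omega)
      have h3 : (z + 1).toNat = z.toNat + 1 := by omega
      rw [h3, hfs] at h2
      constructor
      · rw [h1, h2]
        exact (hnT (f z.toNat)).2
      · intro q hq ⟨hq1, hq2⟩
        rw [h2] at hq2
        rw [h1] at hq1
        exact absurd (hnmin (f z.toNat) q ⟨hq, hq1⟩) (by omega)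
    · have h1 : s z = g (-z).toNat := hsg z (by omega)
      have h2 : s (z + 1) = g (-(z + 1)).toNat := hsg (z + 1) (by omega)
      have h3 : (-z).toNat = (-(z + 1)).toNat + 1 := by omega
      rw [h3, hgs] at h1
      constructor
      · rw [h1, h2]
        exact (hpT (g (-(z + 1)).toNat)).2
      · intro q hq ⟨hq1, hq2⟩
        rw [h1] at hq1
        rw [h2] at hq2
        exact absurd (hpmax (g (-(z + 1)).toNat) q ⟨hq, hq2⟩) (by omega)
  have hmono : StrictMono s := strictMono_int_of_lt_succ (fun z => (hstep z).1)
  have hsT : ∀ z, T (s z) := by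
    intro z
    rcases le_or_gt 0 z with hz | hz
    · rw [hsf z hz]; exact hfT _
    · rw [hsg z hz.le]; exact hgT _
  refine ⟨s, hmono, strictMono_int_tendsto_atTop hmono, strictMono_int_tendsto_atBot hmono, ?_⟩
  intro z
  exact hgap _ _ (hsT z) (hsT (z + 1)) (hstep z).1 (fun q hq => (hstep z).2 q hq)

lemma core_mem_Bset [TopologicalSpace A] [DiscreteTopology A] {C : Set (List A)} {x : ℤ → A}
    (hx : x ∈ closure (Bset C)) (k : ℕ)
    (hfwd : ∀ N : ℤ, ∃ n : ℤ, N ≤ n ∧ ∀ w ∈ C, ¬ wordAt x (n - k) (2 * k + 1) <:+: w)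
    (hbwd : ∀ N : ℤ, ∃ n : ℤ, n ≤ N ∧ ∀ w ∈ C, ¬ wordAt x (n - k) (2 * k + 1) <:+: w) :
    x ∈ Bset C := by
  classical
  have happrox : ∀ M : ℕ, ∃ y ∈ Bset C, ∀ i ∈ Finset.Icc (-(M : ℤ)) M, y i = x i :=
    fun M => closure_approx hx _
  choose y hyB hyx using happrox
  choose sM hmono htop hbot hword using hyB
  set χ : ℕ → (ℤ → Bool) := fun M i => decide (i ∈ Set.range (sM M)) with hχ
  obtain ⟨χ', φ, hφ, hconv⟩ := CompactSpace.tendsto_subseq χ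
  set T : ℤ → Prop := fun i => χ' i = true with hT
  have hagree : ∀ i : ℤ, ∀ᶠ M in atTop, χ (φ M) i = χ' i := by
    intro i
    have h1 : Tendsto (fun M => χ (φ M) i) atTop (𝓝 (χ' i)) := by
      have := tendsto_pi_nhds.1 hconv i
      exact this
    have h2 := h1.eventually ((isOpen_discrete {χ' i}).mem_nhds rfl)
    exact h2.mono fun M hM => hM
  have pick : ∀ (F : Finset ℤ) (N : ℕ), ∃ M : ℕ, N ≤ φ M ∧ ∀ i ∈ F, χ (φ M) i = χ' i := by
    intro F N
    have hall : ∀ᶠ M in atTop, ∀ i ∈ F, χ (φ M) i = χ' i :=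
      eventually_all_finset F |>.2 (fun i _ => hagree i)
    obtain ⟨M, hM1, hM2⟩ := ((eventually_ge_atTop N).and hall).exists
    exact ⟨M, le_trans hM1 hφ.le_apply, hM2⟩
  -- windows give boundaries of approximants
  have hwin : ∀ (n : ℤ) (M : ℕ), (∀ w ∈ C, ¬ wordAt x (n - k) (2 * k + 1) <:+: w) →
      (n + k + 1 ≤ (M : ℤ)) → (-(M : ℤ) ≤ n - k) →
      ∃ q, q ∈ Set.range (sM M) ∧ n - k < q ∧ q ≤ n + k + 1 := by
    intro n M hn hM1 hM2
    have heq : wordAt (y M) (n - k) (2 * k + 1) = wordAt x (n - k) (2 * k + 1) := by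
      apply wordAt_congr
      intro j hj1 hj2
      apply hyx
      simp only [Finset.mem_Icc]
      push_cast at hj2 ⊢
      omega
    have hnoy : ∀ w ∈ C, ¬ wordAt (y M) (n - k) (2 * k + 1) <:+: w := by
      rw [heq]
      exact hn
    obtain ⟨j, hj1, hj2⟩ := exists_boundary (hmono M) (hbot M) (hword M) hnoy
    exact ⟨sM M j, ⟨j, rfl⟩, hj1, hj2⟩
  -- windows give limit boundaries
  have hTwin : ∀ n : ℤ, (∀ w ∈ C, ¬ wordAt x (n - k) (2 * k + 1) <:+: w) →
      ∃ q, T q ∧ n - k < q ∧ q ≤ n + k + 1 := by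
    intro n hn
    obtain ⟨M, hM1, hM2⟩ := pick (Finset.Icc (n - k) (n + k + 1)) (n.natAbs + k + 2)
    have hb1 : n + k + 1 ≤ ((φ M : ℕ) : ℤ) := by omega
    have hb2 : -((φ M : ℕ) : ℤ) ≤ n - k := by omega
    obtain ⟨q, hq, hq1, hq2⟩ := hwin n (φ M) hn hb1 hb2
    have hqd : χ (φ M) q = true := decide_eq_true hq
    have hqT : T q := by
      show χ' q = true
      rw [← hM2 q (by simp only [Finset.mem_Icc]; omega)]
      exact hqd
    exact ⟨q, hqT, hq1, hq2⟩
  have hup : ∀ B : ℤ, ∃ q, T q ∧ B < q := by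
    intro B
    obtain ⟨n, hn1, hn2⟩ := hfwd (B + k + 1)
    obtain ⟨q, hq, h1, h2⟩ := hTwin n hn2
    exact ⟨q, hq, by omega⟩
  have hdown : ∀ B : ℤ, ∃ q, T q ∧ q < B := by
    intro B
    obtain ⟨n, hn1, hn2⟩ := hbwd (B - k - 2)
    obtain ⟨q, hq, h1, h2⟩ := hTwin n hn2
    exact ⟨q, hq, by omega⟩
  have hgap : ∀ p p', T p → T p' → p < p' → (∀ q, T q → ¬(p < q ∧ q < p')) →
      wordAt x p (p' - p).toNat ∈ C := by
    intro p p' hp hp' hlt hbet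
    obtain ⟨M, hM1, hM2⟩ := pick (Finset.Icc p p') (p.natAbs + p'.natAbs + 1)
    set N := φ M with hN
    have hpm : p ∈ Set.range (sM N) := by
      have := hM2 p (by simp only [Finset.mem_Icc]; omega)
      exact of_decide_eq_true (this.trans hp)
    have hp'm : p' ∈ Set.range (sM N) := by
      have := hM2 p' (by simp only [Finset.mem_Icc]; omega)
      exact of_decide_eq_true (this.trans hp')
    have hbetM : ∀ q ∈ Set.range (sM N), ¬ (p < q ∧ q < p') := by
      rintro q hq ⟨h1, h2⟩
      have hqF : q ∈ Finset.Icc p p' := by simp only [Finset.mem_Icc]; omega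
      have hTq : T q := (hM2 q hqF).symm.trans (decide_eq_true hq)
      exact hbet q hTq ⟨h1, h2⟩
    have hyw := gap_word (hmono N) (hword N) hpm hp'm hlt hbetM
    have htn : (((p' - p).toNat : ℕ) : ℤ) = p' - p := Int.toNat_of_nonneg (by omega)
    have heq : wordAt (y N) p (p' - p).toNat = wordAt x p (p' - p).toNat := by
      apply wordAt_congr
      intro j hj1 hj2
      apply hyx
      simp only [Finset.mem_Icc]
      have hNb : (p.natAbs + p'.natAbs + 1 : ℕ) ≤ N := hM1
      omega
    rw [← heq]
    exact hyw
  exact build_mem_Bset T hup hdown hgap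

/-- The bad-window sets. -/
def Dset (C : Set (List A)) (k : ℕ) : Set (ℤ → A) :=
  {z | ∀ w ∈ C, ¬ wordAt z (-(k : ℤ)) (2 * k + 1) <:+: w}

lemma wordAt_eq_ofFn (x : ℤ → A) (i : ℤ) (n : ℕ) :
    wordAt x i n = List.ofFn (fun j : Fin n => x (i + (j : ℤ))) := by
  rw [wordAt_eq, List.ofFn_eq_map]
  apply List.ext_getElem <;> simp

lemma Dset_measurable [Fintype A] [MeasurableSpace A] [MeasurableSingletonClass A]
    (C : Set (List A)) (k : ℕ) : MeasurableSet (Dset C k) := by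
  have he : Dset C k
      = (fun z : ℤ → A => (fun j : Fin (2 * k + 1) => z (-(k : ℤ) + j))) ⁻¹'
        {v | ∀ w ∈ C, ¬ List.ofFn v <:+: w} := by
    ext z
    simp only [Dset, Set.mem_preimage, Set.mem_setOf_eq, wordAt_eq_ofFn]
  rw [he]
  exact (measurable_pi_lambda _ (fun j => measurable_pi_apply _)) MeasurableSet.of_discrete

/-- for any shift-invariant Borel probability measure `μ` on `X_C`,
the set `X_C \ (L_C ∪ B_C)` has measure zero. -/
theorem stmt3 [Fintype A] [TopologicalSpace A] [DiscreteTopology A]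
    [MeasurableSpace A] [MeasurableSingletonClass A]
    (C : Set (List A)) (μ : Measure (ℤ → A)) [IsProbabilityMeasure μ]
    (hinv : MeasurePreserving shift μ μ) (hsupp : μ (Xset C) = 1) :
    μ (Xset C \ (Lset C ∪ Bset C)) = 0 := by
  classical
  have hmeas_inv : Measurable (shiftInv (A := A)) :=
    measurable_pi_lambda _ (fun i => measurable_pi_apply _)
  have hinv' : MeasurePreserving (shiftInv (A := A)) μ μ := by
    refine ⟨hmeas_inv, ?_⟩
    refine Measure.ext fun s hs => ?_
    rw [Measure.map_apply hmeas_inv hs]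
    have h2 : shift ⁻¹' (shiftInv ⁻¹' s) = s := by
      ext z
      have : shiftInv (shift z) = z := by
        funext n
        simp [shift, shiftInv]
      simp [Set.mem_preimage, this]
    calc μ (shiftInv ⁻¹' s)
        = μ (shift ⁻¹' (shiftInv ⁻¹' s)) := (hinv.measure_preimage
            ((hmeas_inv hs).nullMeasurableSet)).symm
      _ = μ s := by rw [h2]
  have hc1 : Conservative shift μ := hinv.conservative
  have hc2 : Conservative (shiftInv (A := A)) μ := hinv'.conservative
  set P : (ℤ → A) → Prop := fun z => ∀ k : ℕ, z ∈ Dset C k →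
    (∃ᶠ n in atTop, shift^[n] z ∈ Dset C k) ∧ (∃ᶠ n in atTop, shiftInv^[n] z ∈ Dset C k)
    with hP
  have hae : ∀ᵐ z ∂μ, P z := by
    rw [hP, ae_all_iff]
    intro k
    filter_upwards [hc1.ae_mem_imp_frequently_image_mem
        (Dset_measurable C k).nullMeasurableSet,
      hc2.ae_mem_imp_frequently_image_mem (Dset_measurable C k).nullMeasurableSet]
      with z h1 h2 hk
    exact ⟨h1 hk, h2 hk⟩
  have key : Xset C \ (Lset C ∪ Bset C) ⊆ {z | ¬ P z} := by
    intro z hz hPz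
    have hzL : z ∉ Lset C := fun h => hz.2 (Or.inl h)
    have hex : ∃ k : ℕ, ∀ w ∈ C, ¬ wordAt z (-(k : ℤ)) (2 * k + 1) <:+: w := by
      by_contra h
      push_neg at h
      exact hzL h
    obtain ⟨k, hk⟩ := hex
    obtain ⟨hfw, hbw⟩ := hPz k hk
    apply hz.2
    right
    have hzX : z ∈ closure (Bset C) := hz.1
    apply core_mem_Bset hzX k
    · intro N
      obtain ⟨m, hm1, hm2⟩ := frequently_atTop.1 hfw N.toNat
      have hm3 : ∀ w ∈ C, ¬ wordAt z (-(k : ℤ) + m) (2 * k + 1) <:+: w := by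
        intro w hw
        have := hm2 w hw
        rwa [wordAt_shift_iterate] at this
      refine ⟨(m : ℤ), by omega, ?_⟩
      have he : ((m : ℤ)) - k = -(k : ℤ) + m := by ring
      rw [he]
      exact hm3
    · intro N
      obtain ⟨m, hm1, hm2⟩ := frequently_atTop.1 hbw (-N).toNat
      have hm3 : ∀ w ∈ C, ¬ wordAt z (-(k : ℤ) - m) (2 * k + 1) <:+: w := by
        intro w hw
        have := hm2 w hw
        rwa [wordAt_shiftInv_iterate] at this
      refine ⟨-(m : ℤ), by omega, ?_⟩
      have he : (-(m : ℤ)) - k = -(k : ℤ) - m := by ring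
      rw [he]
      exact hm3
  exact measure_mono_null key (ae_iff.1 hae)
end

section
/- If C has unique decomposition and f_C(α) > 1 (possibly = ∞), then h(X_C) > α. -/
open Filter Topology MeasureTheory

variable {A : Type*}

lemma length_wordAt (x : ℤ → A) (i : ℤ) (n : ℕ) : (wordAt x i n).length = n := by
  rw [wordAt_eq, List.length_map, List.length_range]

lemma getElem_wordAt (x : ℤ → A) (i : ℤ) (n : ℕ) (t : ℕ) (ht : t < (wordAt x i n).length) :
    (wordAt x i n)[t] = x (i + t) := by
  have ht' : t < ((List.range n).map (fun j : ℕ => x (i + (j:ℤ)))).length := by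
    rwa [← wordAt_eq]
  rw [List.getElem_of_eq (wordAt_eq x i n) ht]
  simp only [List.getElem_map, List.getElem_range]

lemma getElem_flatten_block (l : List (List A)) (r t : ℕ) (hr : r < l.length)
    (ht : t < l[r].length)
    (hidx : ((l.map List.length).take r).sum + t < l.flatten.length) :
    l.flatten[((l.map List.length).take r).sum + t] = l[r][t] := by
  have h1 := List.drop_take_succ_flatten_eq_getElem l r hr
  have ht' : t < (List.drop ((l.map List.length).take r).sum
      (List.take ((l.map List.length).take (r+1)).sum l.flatten)).length := by
    rw [h1]; exact ht
  calc l.flatten[((l.map List.length).take r).sum + t]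
      = (List.drop ((l.map List.length).take r).sum
          (List.take ((l.map List.length).take (r+1)).sum l.flatten))[t]'ht' := by
        rw [List.getElem_drop, List.getElem_take]
    _ = l[r][t] := by
        simp only [h1]

lemma sum_take_le {L : List ℕ} (r : ℕ) : (L.take r).sum ≤ L.sum := by
  conv_rhs => rw [← List.sum_take_add_sum_drop L r]
  exact Nat.le_add_right _ _

lemma lang_length {X : Set (ℤ → A)} {n : ℕ} {w : List A} (hw : w ∈ language X n) :
    w.length = n := by
  obtain ⟨x, -, i, rfl⟩ := hw
  exact length_wordAt x i n

lemma lang_finite [Finite A] (X : Set (ℤ → A)) (n : ℕ) : (language X n).Finite :=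
  (List.finite_length_eq A n).subset fun _ hw => lang_length hw

lemma lang_card_le [Fintype A] (X : Set (ℤ → A)) (n : ℕ) :
    (language X n).ncard ≤ Fintype.card A ^ n := by
  have h1 : (language X n).ncard ≤ ({l : List A | l.length = n}).ncard :=
    Set.ncard_le_ncard (fun _ hw => lang_length hw) (List.finite_length_eq A n)
  refine h1.trans ?_
  rw [← Nat.card_coe_set_eq]
  have h2 : Nat.card ({l : List A | l.length = n}) ≤ Nat.card (Fin n → A) := by
    apply Nat.card_le_card_of_injective
      (f := fun l : {l : List A | l.length = n} => (fun i : Fin n => l.1[(i : ℕ)]'(by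
        have h3 := l.2; simp only [Set.mem_setOf_eq] at h3; omega)))
    intro l l' h
    apply Subtype.ext
    have hll : l.1.length = l'.1.length := by
      have h3 := l.2; have h4 := l'.2
      simp only [Set.mem_setOf_eq] at h3 h4; rw [h3, h4]
    refine List.ext_getElem hll fun i h1 h2 => ?_
    have hi : i < n := by
      have h3 := l.2; simp only [Set.mem_setOf_eq] at h3; omega
    exact congrFun h ⟨i, hi⟩
  refine h2.trans ?_
  rw [Nat.card_eq_fintype_card]
  simp

lemma flatten_mem_language [TopologicalSpace A] (C : Set (List A))
    (l : List (List A)) (hl : 0 < l.length)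
    (hC : ∀ u ∈ l, u ∈ C) (hne : ∀ u ∈ l, 0 < u.length) :
    l.flatten ∈ language (Xset C) l.flatten.length := by
  set w : List A := l.flatten with hw
  set m : ℕ := l.length with hm
  set k : ℕ := w.length with hk
  have hkpos : 0 < k := by
    rw [hk, hw, List.length_flatten]
    apply List.sum_pos
    · intro b hb
      obtain ⟨u, hu, rfl⟩ := List.mem_map.mp hb
      exact hne u hu
    · simpa using List.length_pos_iff.mp hl
  have hkZ : (0:ℤ) < (k:ℤ) := by exact_mod_cast hkpos
  have hmZ : (0:ℤ) < (m:ℤ) := by exact_mod_cast hl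
  have hidx : ∀ n : ℤ, (n % (k:ℤ)).toNat < w.length := by
    intro n
    rw [← hk, Int.toNat_lt' hkpos]
    exact Int.emod_lt_of_pos n hkZ
  set x : ℤ → A := fun n => w[(n % (k:ℤ)).toNat]'(hidx n) with hx
  have hxval : ∀ (i : ℕ) (hik : i < k) (q : ℤ),
      x ((i:ℤ) + (k:ℤ) * q) = w[i]'(by rw [← hk]; exact hik) := by
    intro i hik q
    have h1 : ((i:ℤ) + (k:ℤ) * q) % (k:ℤ) = (i:ℤ) := by
      rw [Int.add_mul_emod_self_left]
      exact Int.emod_eq_of_lt (by positivity) (by exact_mod_cast hik)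
    simp only [hx, h1, Int.toNat_natCast]
  set P : ℕ → ℕ := fun r => ((l.map List.length).take r).sum with hP
  have hPm : P m = k := by
    simp only [hP]
    rw [List.take_of_length_le (by simp [hm])]
    rw [hk, hw, List.length_flatten]
  have hPsucc : ∀ r (hr : r < m), P (r + 1) = P r + (l[r]'(hm ▸ hr)).length := by
    intro r hr
    simp only [hP]
    rw [List.sum_take_succ _ _ (by simpa [hm] using hr)]
    congr 1
    exact List.getElem_map _
  have hPle : ∀ r, P r ≤ k := by
    intro r
    rw [hk, hw, List.length_flatten]
    exact sum_take_le r
  have hgetpos : ∀ r (hr : r < m), 0 < (l[r]'(hm ▸ hr)).length :=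
    fun r hr => hne _ (List.getElem_mem _)
  have hrlt : ∀ j : ℤ, (j % (m:ℤ)).toNat < m := by
    intro j
    rw [Int.toNat_lt' hl]
    exact Int.emod_lt_of_pos j hmZ
  set s : ℤ → ℤ := fun j => (k:ℤ) * (j / (m:ℤ)) + (P (j % (m:ℤ)).toNat : ℤ) with hs
  have hstep : ∀ j : ℤ,
      s (j + 1) = s j + ((l[(j % (m:ℤ)).toNat]'(hm ▸ hrlt j)).length : ℤ) := by
    intro j
    have hj : (m:ℤ) * (j / (m:ℤ)) + j % (m:ℤ) = j := Int.mul_ediv_add_emod j m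
    have hr0 : 0 ≤ j % (m:ℤ) := Int.emod_nonneg j hmZ.ne'
    have hrm : j % (m:ℤ) < (m:ℤ) := Int.emod_lt_of_pos j hmZ
    have hrt : ((j % (m:ℤ)).toNat : ℤ) = j % (m:ℤ) := Int.toNat_of_nonneg hr0
    have hrmN : (j % (m:ℤ)).toNat < m := hrlt j
    rcases lt_or_eq_of_le (by omega : j % (m:ℤ) + 1 ≤ (m:ℤ)) with h1 | h1
    · have h2 : (j + 1) / (m:ℤ) = j / (m:ℤ) ∧ (j + 1) % (m:ℤ) = j % (m:ℤ) + 1 :=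
        (Int.ediv_emod_unique hmZ).mpr ⟨by omega, by omega, h1⟩
      have h3 : (j % (m:ℤ) + 1).toNat = (j % (m:ℤ)).toNat + 1 := by omega
      have h4 := hPsucc (j % (m:ℤ)).toNat hrmN
      simp only [hs, h2.1, h2.2, h3, h4]
      push_cast
      ring
    · have hmul : (m:ℤ) * (j / (m:ℤ) + 1) = (m:ℤ) * (j / (m:ℤ)) + m := by ring
      have h2 : (j + 1) / (m:ℤ) = j / (m:ℤ) + 1 ∧ (j + 1) % (m:ℤ) = 0 :=
        (Int.ediv_emod_unique hmZ).mpr ⟨by omega, by omega, hmZ⟩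
      have h3 : (j % (m:ℤ)).toNat + 1 = m := by omega
      have h4 := hPsucc (j % (m:ℤ)).toNat hrmN
      rw [h3, hPm] at h4
      have hP0 : P 0 = 0 := by simp [hP]
      simp only [hs, h2.1, h2.2, Int.toNat_zero, hP0]
      have h5 : (k:ℤ) = (P (j % (m:ℤ)).toNat : ℤ) + ((l[(j % (m:ℤ)).toNat]'(hm ▸ hrmN)).length : ℤ) := by
        exact_mod_cast h4
      have h6 : (k:ℤ) * (j / (m:ℤ) + 1) = (k:ℤ) * (j / (m:ℤ)) + (k:ℤ) := by ring
      rw [h6]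
      push_cast
      linarith
  have hs0 : s 0 = 0 := by
    have hP0 : P 0 = 0 := by simp [hP]
    simp [hs, hP0]
  have hmono : StrictMono s := by
    apply strictMono_int_of_lt_succ
    intro j
    have h1 := hstep j
    have h2 := hgetpos _ (hrlt j)
    omega
  have hup : ∀ n : ℕ, (n:ℤ) ≤ s (n:ℤ) := by
    intro n
    induction n with
    | zero => simp [hs0]
    | succ n ih =>
      have h1 := hstep (n:ℤ)
      have h2 := hgetpos _ (hrlt (n:ℤ))
      push_cast
      push_cast at ih
      omega
  have hdown : ∀ n : ℕ, s (-(n:ℤ)) ≤ -(n:ℤ) := by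
    intro n
    induction n with
    | zero => simp [hs0]
    | succ n ih =>
      have h1 := hstep (-(n:ℤ) - 1)
      have h2 := hgetpos _ (hrlt (-(n:ℤ) - 1))
      have h3 : (-(n:ℤ) - 1) + 1 = -(n:ℤ) := by ring
      rw [h3] at h1
      push_cast
      rw [show -((n:ℤ) + 1) = -(n:ℤ) - 1 from by ring]
      omega
  have htop : Tendsto s atTop atTop :=
    hmono.monotone.tendsto_atTop_atTop fun b =>
      ⟨(b.toNat : ℤ), (Int.self_le_toNat b).trans (hup b.toNat)⟩
  have hbot : Tendsto s atBot atBot :=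
    hmono.monotone.tendsto_atBot_atBot fun b =>
      ⟨-(((-b).toNat : ℤ)), (hdown (-b).toNat).trans (by
        have := Int.self_le_toNat (-b); omega)⟩
  have hblock : ∀ j : ℤ,
      wordAt x (s j) (l[(j % (m:ℤ)).toNat]'(hm ▸ hrlt j)).length
        = l[(j % (m:ℤ)).toNat]'(hm ▸ hrlt j) := by
    intro j
    have hrm : (j % (m:ℤ)).toNat < m := hrlt j
    apply List.ext_getElem
    · rw [length_wordAt]
    intro t h1 h2
    rw [length_wordAt] at h1
    rw [getElem_wordAt _ _ _ _ (by rw [length_wordAt]; exact h1)]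
    have hPk : P (j % (m:ℤ)).toNat + t < k := by
      have h3 := hPsucc _ hrm
      have h4 := hPle ((j % (m:ℤ)).toNat + 1)
      omega
    have harg : s j + (t:ℤ) = ((P (j % (m:ℤ)).toNat + t : ℕ) : ℤ) + (k:ℤ) * (j / (m:ℤ)) := by
      simp only [hs]
      push_cast
      ring
    rw [harg, hxval _ hPk (j / (m:ℤ))]
    exact getElem_flatten_block l (j % (m:ℤ)).toNat t (hm ▸ hrm) h1 hPk
  have hBmem : x ∈ Bset C := by
    refine ⟨s, hmono, htop, hbot, fun j => ?_⟩
    have h1 : (s (j+1) - s j).toNat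
        = (l[(j % (m:ℤ)).toNat]'(hm ▸ hrlt j)).length := by
      rw [hstep j]; omega
    rw [h1, hblock j]
    exact hC _ (List.getElem_mem _)
  have hw0 : wordAt x 0 k = w := by
    apply List.ext_getElem
    · rw [length_wordAt, hk]
    intro t h1 h2
    rw [length_wordAt] at h1
    rw [getElem_wordAt _ _ _ _ (by rwa [length_wordAt])]
    have harg : (0:ℤ) + (t:ℤ) = ((t:ℕ):ℤ) + (k:ℤ) * 0 := by push_cast; ring
    rw [harg, hxval t h1 0]
  exact ⟨x, subset_closure hBmem, 0, hw0⟩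


set_option maxHeartbeats 1600000 in
/-- if `C` has unique decomposition and `f_C(α) > 1` (possibly `= ∞`),
then `h(X_C) > α`. -/
theorem stmt9 [Fintype A] [TopologicalSpace A] [DiscreteTopology A]
    (C : Set (List A)) (α : ℝ) (hUD : UniqueDecomposition C) (hf : 1 < fC C α) :
    α < entropy (Xset C) := by
  classical
  have hfin : ∀ j : ℕ, (Cwords C j).Finite := fun j =>
    (List.finite_length_eq A j).subset fun w hw => hw.2
  obtain ⟨s0, hs0⟩ : ∃ s : Finset ℕ, 1 < ∑ j ∈ s, ((Cwords C (j+1)).ncard : ENNReal) *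
      ENNReal.ofReal (Real.exp (-((j:ℝ)+1) * α)) := by
    rw [fC, ENNReal.tsum_eq_iSup_sum] at hf
    exact lt_iSup_iff.mp hf
  set N : ℕ := s0.sup id + 1 with hNdef
  have hN1 : 1 ≤ N := Nat.le_add_left 1 _
  have hNR : (0:ℝ) < (N:ℝ) := by exact_mod_cast hN1
  have hsub : s0 ⊆ Finset.range N := fun j hj =>
    Finset.mem_range.mpr (Nat.lt_succ_of_le (Finset.le_sup (f := id) hj))
  have hs1 : 1 < ∑ j ∈ Finset.range N, ((Cwords C (j+1)).ncard : ENNReal) *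
      ENNReal.ofReal (Real.exp (-((j:ℝ)+1) * α)) :=
    hs0.trans_le (Finset.sum_le_sum_of_subset hsub)
  set T : ℝ := ∑ j ∈ Finset.range N, ((Cwords C (j+1)).ncard : ℝ) * Real.exp (-((j:ℝ)+1) * α)
    with hTdef
  have hT1 : 1 < T := by
    by_contra hcon
    push_neg at hcon
    have heq : ∑ j ∈ Finset.range N, ((Cwords C (j+1)).ncard : ENNReal) *
        ENNReal.ofReal (Real.exp (-((j:ℝ)+1) * α)) = ENNReal.ofReal T := by
      rw [hTdef, ENNReal.ofReal_sum_of_nonneg (fun j _ => by positivity)]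
      refine Finset.sum_congr rfl fun j _ => ?_
      rw [ENNReal.ofReal_mul (by positivity), ENNReal.ofReal_natCast]
    rw [heq] at hs1
    have hle : ENNReal.ofReal T ≤ 1 := by
      rw [← ENNReal.ofReal_one]
      exact ENNReal.ofReal_le_ofReal hcon
    exact absurd hs1 hle.not_gt
  have hTpos : (0:ℝ) < T := lt_trans one_pos hT1
  have hlogT : 0 < Real.log T := Real.log_pos hT1
  set CF : ℕ → Finset (List A) := fun j => (hfin (j+1)).toFinset with hCF
  set DF : Finset (List A) := (Finset.range N).biUnion CF with hDF
  have hDFmem : ∀ w ∈ DF, w ∈ C ∧ 1 ≤ w.length ∧ w.length ≤ N := by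
    intro w hw
    rw [hDF, Finset.mem_biUnion] at hw
    obtain ⟨j, hj, hw⟩ := hw
    simp only [hCF, Set.Finite.mem_toFinset] at hw
    exact ⟨hw.1, by rw [hw.2]; omega,
      by rw [hw.2]; exact Nat.succ_le_of_lt (Finset.mem_range.mp hj)⟩
  have hDT : ∑ w ∈ DF, Real.exp (-(w.length : ℝ) * α) = T := by
    rw [hDF, Finset.sum_biUnion (by
      intro i _ j _ hij
      simp only [Finset.disjoint_left]
      intro w hwi hwj
      simp only [hCF, Set.Finite.mem_toFinset] at hwi hwj
      have := hwi.2
      have := hwj.2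
      exact hij (by omega))]
    rw [hTdef]
    refine Finset.sum_congr rfl fun j hj => ?_
    have hconst : ∀ w ∈ CF j, Real.exp (-(w.length:ℝ) * α) = Real.exp (-((j:ℝ)+1) * α) := by
      intro w hw
      simp only [hCF, Set.Finite.mem_toFinset] at hw
      rw [hw.2]
      push_cast
      ring_nf
    rw [Finset.sum_congr rfl hconst, Finset.sum_const, nsmul_eq_mul]
    congr 1
    rw [Set.ncard_eq_toFinset_card (Cwords C (j+1)) (hfin (j+1))]
  have hcardA : 1 ≤ Fintype.card A := by
    by_contra hA
    push_neg at hA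
    have hA0 : Fintype.card A = 0 := by omega
    have hIE : IsEmpty A := Fintype.card_eq_zero_iff.mp hA0
    have hempty : ∀ j : ℕ, Cwords C (j+1) = ∅ := by
      intro j
      ext u
      simp only [Set.mem_empty_iff_false, iff_false]
      intro hu
      have hul : u.length = j+1 := hu.2
      have hu0 : u ≠ [] := by intro h; rw [h] at hul; simp at hul
      obtain ⟨a, _, _⟩ := List.exists_cons_of_ne_nil hu0
      exact hIE.false a
    have hT0 : T = 0 := by
      rw [hTdef]
      apply Finset.sum_eq_zero
      intro j _
      rw [hempty j]
      simp
    linarith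
  have hbdd : IsBoundedUnder (· ≤ ·) atTop
      (fun n : ℕ => Real.log ((language (Xset C) n).ncard) / n) := by
    apply isBoundedUnder_of
    refine ⟨Real.log (Fintype.card A), fun n => ?_⟩
    have hlogA : 0 ≤ Real.log (Fintype.card A) :=
      Real.log_nonneg (by exact_mod_cast hcardA)
    rcases Nat.eq_zero_or_pos n with rfl | hn
    · simpa using hlogA
    · rw [div_le_iff₀ (by exact_mod_cast hn)]
      have hle := lang_card_le (Xset C) n
      rcases Nat.eq_zero_or_pos ((language (Xset C) n).ncard) with h0 | hpos
      · rw [h0]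
        simp only [Nat.cast_zero, Real.log_zero]
        positivity
      · calc Real.log ((language (Xset C) n).ncard)
            ≤ Real.log ((Fintype.card A ^ n : ℕ) : ℝ) :=
              Real.log_le_log (by exact_mod_cast hpos) (by exact_mod_cast hle)
          _ = Real.log (Fintype.card A) * n := by
              push_cast
              rw [Real.log_pow]
              ring
  set δ : ℝ := Real.log T / (2 * N) with hδdef
  have hδpos : 0 < δ := div_pos hlogT (by positivity)
  -- eventual smallness of log(mN+1)
  have h1 : Tendsto (fun m : ℕ => ((m:ℝ) * N + 1)) atTop atTop := by
    apply Filter.tendsto_atTop_add_const_right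
    exact Filter.Tendsto.atTop_mul_const hNR tendsto_natCast_atTop_atTop
  have h2 : (fun m : ℕ => Real.log ((m:ℝ) * N + 1)) =o[atTop] fun m : ℕ => ((m:ℝ) * N + 1) :=
    Real.isLittleO_log_id_atTop.comp_tendsto h1
  have h3 : (fun m : ℕ => ((m:ℝ) * N + 1)) =O[atTop] fun m : ℕ => (m:ℝ) := by
    rw [Asymptotics.isBigO_iff]
    refine ⟨N + 1, ?_⟩
    filter_upwards [Filter.eventually_ge_atTop 1] with m hm
    have hm1 : (1:ℝ) ≤ (m:ℝ) := by exact_mod_cast hm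
    rw [Real.norm_eq_abs, Real.norm_eq_abs,
      abs_of_nonneg (by positivity), abs_of_nonneg (by positivity)]
    nlinarith
  have h4 := (h2.trans_isBigO h3).def (half_pos hlogT)
  have h5 : ∀ᶠ m : ℕ in atTop, Real.log ((m:ℝ) * N + 1) ≤ Real.log T / 2 * m := by
    filter_upwards [h4] with m hm
    rw [Real.norm_eq_abs, Real.norm_eq_abs] at hm
    have hab : Real.log ((m:ℝ)*N+1) ≤ |Real.log ((m:ℝ)*N+1)| := le_abs_self _
    have h6 : |(m:ℝ)| = m := abs_of_nonneg (by positivity)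
    rw [h6] at hm
    linarith
  obtain ⟨m₀, hm₀⟩ := Filter.eventually_atTop.mp h5
  -- main per-m claim
  have hmain : ∀ m : ℕ, 1 ≤ m → Real.log ((m:ℝ)*N+1) ≤ Real.log T / 2 * m →
      ∃ k : ℕ, m ≤ k ∧ α + δ ≤ Real.log ((language (Xset C) k).ncard) / k := by
    intro m hm1 hm2
    set piF : Finset (Fin m → List A) := Fintype.piFinset (fun _ => DF) with hpiF
    set Ψ : (Fin m → List A) → List A := fun g => (List.ofFn g).flatten with hΨ
    have hΨlen : ∀ g : Fin m → List A, (Ψ g).length = ∑ i, (g i).length := by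
      intro g
      simp only [hΨ]
      rw [List.length_flatten, List.map_ofFn, List.sum_ofFn]
      rfl
    have hmemDF : ∀ g ∈ piF, ∀ i, g i ∈ DF := fun g hg => Fintype.mem_piFinset.mp hg
    have hlen_le : ∀ g ∈ piF, (Ψ g).length ≤ m * N := by
      intro g hg
      rw [hΨlen]
      calc ∑ i, (g i).length ≤ ∑ _i : Fin m, N :=
            Finset.sum_le_sum fun i _ => (hDFmem _ (hmemDF g hg i)).2.2
        _ = m * N := by simp [Finset.sum_const, mul_comm]
    have hlen_ge : ∀ g ∈ piF, m ≤ (Ψ g).length := by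
      intro g hg
      rw [hΨlen]
      calc m = ∑ _i : Fin m, 1 := by simp
        _ ≤ ∑ i, (g i).length :=
            Finset.sum_le_sum fun i _ => (hDFmem _ (hmemDF g hg i)).2.1
    have hpow : T ^ m = ∑ g ∈ piF, Real.exp (-((Ψ g).length : ℝ) * α) := by
      have hprod : T ^ m = ∏ _i : Fin m, T := by rw [Finset.prod_const]; simp
      rw [hprod]
      have hfac : ∀ _i : Fin m, T = ∑ w ∈ DF, Real.exp (-(w.length : ℝ) * α) :=
        fun _ => hDT.symm
      rw [Finset.prod_congr rfl (fun i _ => hfac i), Finset.prod_univ_sum]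
      refine Finset.sum_congr rfl fun g hg => ?_
      rw [← Real.exp_sum]
      congr 1
      rw [hΨlen]
      push_cast
      rw [← Finset.sum_neg_distrib, ← Finset.sum_mul]
    have hfiber : ∑ k ∈ Finset.range (m*N+1),
        (((piF.filter (fun g => (Ψ g).length = k)).card : ℝ) * Real.exp (-(k:ℝ)*α)) = T ^ m := by
      rw [hpow, ← Finset.sum_fiberwise_of_maps_to
        (fun g hg => Finset.mem_range.mpr (Nat.lt_succ_of_le (hlen_le g hg)))
        (fun g => Real.exp (-((Ψ g).length:ℝ)*α))]
      refine Finset.sum_congr rfl fun k hk => ?_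
      rw [Finset.sum_congr rfl (fun g hg => by
        rw [(Finset.mem_filter.mp hg).2]), Finset.sum_const, nsmul_eq_mul]
    have hpos' : (0:ℝ) < ((m*N+1 : ℕ):ℝ) := by positivity
    obtain ⟨k, hk_mem, hk_ge⟩ : ∃ k ∈ Finset.range (m*N+1),
        T^m / ((m*N+1 : ℕ):ℝ) ≤
          ((piF.filter (fun g => (Ψ g).length = k)).card : ℝ) * Real.exp (-(k:ℝ)*α) := by
      apply Finset.exists_le_of_sum_le ⟨0, Finset.mem_range.mpr (by omega)⟩
      rw [Finset.sum_const, Finset.card_range, nsmul_eq_mul, hfiber, mul_div_cancel₀]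
      exact hpos'.ne'
    have hTm_pos : 0 < T^m / ((m*N+1:ℕ):ℝ) := by positivity
    have hfib_ne : (piF.filter (fun g => (Ψ g).length = k)).Nonempty := by
      rw [Finset.nonempty_iff_ne_empty]
      intro hemp
      rw [hemp] at hk_ge
      simp only [Finset.card_empty, Nat.cast_zero, zero_mul] at hk_ge
      linarith
    obtain ⟨g₀, hg₀⟩ := hfib_ne
    have hg₀piF : g₀ ∈ piF := (Finset.mem_filter.mp hg₀).1
    have hg₀k : (Ψ g₀).length = k := (Finset.mem_filter.mp hg₀).2
    have hk_ge_m : m ≤ k := hg₀k ▸ hlen_ge g₀ hg₀piF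
    have hk_le : k ≤ m * N := by have := Finset.mem_range.mp hk_mem; omega
    have hkpos : 0 < k := lt_of_lt_of_le hm1 hk_ge_m
    have hCmem : ∀ g ∈ piF, ∀ u ∈ List.ofFn g, u ∈ C := by
      intro g hg
      rw [List.forall_mem_ofFn_iff]
      intro i
      exact (hDFmem _ (hmemDF g hg i)).1
    have hcard_le : (piF.filter (fun g => (Ψ g).length = k)).card
        ≤ (language (Xset C) k).ncard := by
      have hinj : Set.InjOn Ψ ↑(piF.filter fun g => (Ψ g).length = k) := by
        intro g hg g' hg' hgg
        have hgpi : g ∈ piF := (Finset.mem_filter.mp (Finset.mem_coe.mp hg)).1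
        have hgpi' : g' ∈ piF := (Finset.mem_filter.mp (Finset.mem_coe.mp hg')).1
        have := hUD (List.ofFn g) (List.ofFn g') (hCmem g hgpi) (hCmem g' hgpi') hgg
        exact List.ofFn_injective this
      have himg : Ψ '' ↑(piF.filter fun g => (Ψ g).length = k) ⊆ language (Xset C) k := by
        rintro _ ⟨g, hg, rfl⟩
        have hgf := Finset.mem_coe.mp hg
        have hgpi := (Finset.mem_filter.mp hgf).1
        have hgk := (Finset.mem_filter.mp hgf).2
        have ha : 0 < (List.ofFn g).length := by rw [List.length_ofFn]; exact hm1
        have hb : ∀ u ∈ List.ofFn g, 0 < u.length := by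
          rw [List.forall_mem_ofFn_iff]
          intro i
          exact (hDFmem _ (hmemDF g hgpi i)).2.1
        have hmem := flatten_mem_language C (List.ofFn g) ha (hCmem g hgpi) hb
        rw [← hgk]
        exact hmem
      have e1 : ((piF.filter fun g => (Ψ g).length = k) : Set (Fin m → List A)).ncard
          = (piF.filter fun g => (Ψ g).length = k).card := Set.ncard_coe_finset _
      have e2 : (Ψ '' ((piF.filter fun g => (Ψ g).length = k) : Set (Fin m → List A))).ncard
          = ((piF.filter fun g => (Ψ g).length = k) : Set (Fin m → List A)).ncard :=
        Set.ncard_image_of_injOn hinj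
      have e3 := Set.ncard_le_ncard himg (lang_finite (Xset C) k)
      omega
    have hLk : T^m / ((m*N+1:ℕ):ℝ) ≤ ((language (Xset C) k).ncard : ℝ) * Real.exp (-(k:ℝ)*α) :=
      hk_ge.trans (mul_le_mul_of_nonneg_right (by exact_mod_cast hcard_le)
        (le_of_lt (Real.exp_pos _)))
    have hLkpos : (0:ℝ) < ((language (Xset C) k).ncard : ℝ) := by
      by_contra h
      push_neg at h
      have h0 : ((language (Xset C) k).ncard : ℝ) = 0 := le_antisymm h (by positivity)
      rw [h0, zero_mul] at hLk
      linarith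
    have hlog := Real.log_le_log hTm_pos hLk
    rw [Real.log_div (by positivity) (by positivity), Real.log_pow,
      Real.log_mul (by positivity) (Real.exp_ne_zero _), Real.log_exp] at hlog
    have hcast : (((m*N+1 : ℕ)):ℝ) = (m:ℝ)*(N:ℝ)+1 := by push_cast; ring
    rw [hcast] at hlog
    have hkN : (k:ℝ) ≤ (m:ℝ) * N := by exact_mod_cast hk_le
    have hkδ : (k:ℝ) * δ ≤ (m:ℝ) * Real.log T / 2 := by
      rw [hδdef]
      calc (k:ℝ) * (Real.log T/(2*N)) ≤ ((m:ℝ)*N) * (Real.log T/(2*N)) :=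
            mul_le_mul_of_nonneg_right hkN (by positivity)
        _ = (m:ℝ) * Real.log T / 2 := by field_simp
    have hfinal : ((k:ℝ)) * (α + δ) ≤ Real.log ((language (Xset C) k).ncard) := by
      have hexp : (k:ℝ) * (α + δ) = (k:ℝ)*α + (k:ℝ)*δ := by ring
      rw [hexp]
      linarith
    refine ⟨k, hk_ge_m, ?_⟩
    rw [le_div_iff₀ (by exact_mod_cast hkpos : (0:ℝ) < (k:ℝ))]
    calc (α+δ) * k = (k:ℝ) * (α+δ) := mul_comm _ _
      _ ≤ _ := hfinal
  have hfreq : ∃ᶠ k in atTop, α + δ ≤ Real.log ((language (Xset C) k).ncard) / k := by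
    rw [Filter.frequently_atTop]
    intro K
    obtain ⟨k, hk1, hk2⟩ := hmain (max (max K m₀) 1) (le_max_right _ _)
      (hm₀ _ ((le_max_right K m₀).trans (le_max_left _ _)))
    exact ⟨k, ((le_max_left K m₀).trans (le_max_left _ _)).trans hk1, hk2⟩
  have hlim := le_limsup_of_frequently_le hfreq hbdd
  have hent : entropy (Xset C) =
      limsup (fun n : ℕ => Real.log ((language (Xset C) n).ncard) / n) atTop := rfl
  linarith [hlim, hδpos]
end

section
/- Let A = {1,2,3,4,0} and C = {a_1⋯a_n 0^{⌊log₂ n⌋} : n ≥ 2, a_i ∈ {1,2,3,4}}. Then f_C(ln 4) = Σ_{n≥2} 4^n · 4^{-(n + ⌊log₂ n⌋)} = 1, while Σ_{n≥2} (n + ⌊log₂ n⌋) · 4^n · 4^{-(n + ⌊log₂ n⌋)} = ∞, since 4^{-⌊log₂ n⌋} ≥ 4^{-log₂ n} = n^{-2} up to a bounded factor and Σ n · n^{-2} diverges. -/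
open Filter Topology MeasureTheory

variable {A : Type*}

/-- The code word set `C = {a₁⋯a_n 0^{⌊log₂ n⌋} : n ≥ 2, aᵢ ∈ {1,2,3,4}}`
over the alphabet `{0,1,2,3,4}`. -/
def C17 : Set (List (Fin 5)) :=
  {w | ∃ n : ℕ, 2 ≤ n ∧ ∃ l : List (Fin 5), l.length = n ∧
    (∀ a ∈ l, a = 1 ∨ a = 2 ∨ a = 3 ∨ a = 4) ∧
    w = l ++ List.replicate (Nat.log 2 n) 0}


section Aux17

lemma gmono17 : StrictMono (fun n : ℕ => n + Nat.log 2 n) := fun a b h => by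
  have := Nat.log_mono_right (b := 2) h.le; simp only []; omega

noncomputable def phi17 (n : ℕ) (f : Fin n → Fin 4) : List (Fin 5) :=
  (List.ofFn fun i => (f i).succ) ++ List.replicate (Nat.log 2 n) 0

lemma phi17_inj (n : ℕ) : Function.Injective (phi17 n) := by
  intro f f' h
  have h2 := List.append_cancel_right h
  rw [List.ofFn_inj] at h2
  funext i
  exact Fin.succ_injective _ (congrFun h2 i)

lemma cwords17_eq (n : ℕ) (hn : 2 ≤ n) :
    Cwords C17 (n + Nat.log 2 n) = phi17 n '' Set.univ := by
  ext w
  constructor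
  · rintro ⟨⟨n', hn', l, hl, hall, rfl⟩, hlen⟩
    have hlen' : n' + Nat.log 2 n' = n + Nat.log 2 n := by
      simpa [hl] using hlen
    have hn'n : n' = n := gmono17.injective hlen'
    subst hn'n
    have key : ∀ a : Fin 5, (a = 1 ∨ a = 2 ∨ a = 3 ∨ a = 4) → a ≠ 0 := by decide
    have hne : ∀ i : Fin (l.length), l.get i ≠ 0 := fun i =>
      key _ (hall _ (l.get_mem i))
    refine ⟨fun i => (l.get (Fin.cast hl.symm i)).pred (hne _), Set.mem_univ _, ?_⟩
    unfold phi17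
    congr 1
    refine List.ext_get (by simp [hl]) fun i h1 h2 => ?_
    simp [Fin.succ_pred]
  · rintro ⟨f, -, rfl⟩
    refine ⟨⟨n, hn, List.ofFn fun i => (f i).succ, by simp, ?_, rfl⟩, ?_⟩
    · intro a ha
      rw [List.mem_ofFn] at ha
      obtain ⟨i, rfl⟩ := ha
      have key : ∀ b : Fin 4, b.succ = 1 ∨ b.succ = 2 ∨ b.succ = 3 ∨ b.succ = 4 := by decide
      exact key (f i)
    · simp [phi17]

lemma cwords17_card (n : ℕ) (hn : 2 ≤ n) :
    (Cwords C17 (n + Nat.log 2 n)).ncard = 4 ^ n := by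
  rw [cwords17_eq n hn, Set.ncard_image_of_injective _ (phi17_inj n), Set.ncard_univ,
    Nat.card_eq_fintype_card]
  simp

lemma cwords17_empty (m : ℕ) (h : ∀ n, 2 ≤ n → n + Nat.log 2 n ≠ m) :
    Cwords C17 m = ∅ := by
  ext w
  simp only [Set.mem_empty_iff_false, iff_false]
  rintro ⟨⟨n, hn, l, hl, -, rfl⟩, hlen⟩
  exact h n hn (by simpa [hl] using hlen)

lemma exp_term17 (k : ℕ) :
    ENNReal.ofReal (Real.exp (-((k : ℝ) + 1) * Real.log 4)) = ((4 : ENNReal)⁻¹) ^ (k + 1) := by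
  have h4 : (0 : ℝ) < 4 := by norm_num
  have h : -((k : ℝ) + 1) * Real.log 4 = Real.log ((4⁻¹ : ℝ) ^ (k + 1)) := by
    rw [Real.log_pow, Real.log_inv]; push_cast; ring
  rw [h, Real.exp_log (by positivity), ENNReal.ofReal_pow (by positivity),
    ENNReal.ofReal_inv_of_pos h4, ENNReal.ofReal_ofNat]

lemma four_ne_top : (4 : ENNReal) ≠ ⊤ := by norm_num

lemma pow_mul_inv_pow17 (m : ℕ) : (4 : ENNReal) ^ m * ((4 : ENNReal)⁻¹) ^ m = 1 := by
  rw [← mul_pow, ENNReal.mul_inv_cancel (by norm_num) four_ne_top, one_pow]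

lemma log17 (k j : ℕ) (hj : j < 2 ^ (k + 1)) : Nat.log 2 (2 ^ (k + 1) + j) = k + 1 := by
  refine Nat.log_eq_of_pow_le_of_lt_pow (by omega) ?_
  have : 2 ^ (k + 1 + 1) = 2 ^ (k + 1) * 2 := pow_succ 2 (k + 1)
  omega

lemma geo_sum17 : ∑' k : ℕ, ((2 : ENNReal)⁻¹) ^ (k + 1) = 1 := by
  have : ∀ k : ℕ, ((2 : ENNReal)⁻¹) ^ (k + 1) = ((2 : ENNReal)⁻¹) ^ k * 2⁻¹ := fun k => pow_succ _ _
  rw [tsum_congr this, ENNReal.tsum_mul_right, ENNReal.tsum_geometric,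
    ENNReal.one_sub_inv_two, inv_inv, ENNReal.mul_inv_cancel two_ne_zero ENNReal.ofNat_ne_top]

lemma two_mul_qinv17 : (2 : ENNReal) * (4 : ENNReal)⁻¹ = (2 : ENNReal)⁻¹ := by
  have h : (4 : ENNReal) = 2 * 2 := by norm_num
  rw [h, ENNReal.mul_inv (Or.inl two_ne_zero) (Or.inl ENNReal.ofNat_ne_top), ← mul_assoc,
    ENNReal.mul_inv_cancel two_ne_zero ENNReal.ofNat_ne_top, one_mul]

lemma sum_q_log17 : ∑' n : ℕ, ((4 : ENNReal)⁻¹) ^ (Nat.log 2 (n + 2)) = 1 := by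
  set q : ENNReal := (4 : ENNReal)⁻¹ with hq
  set g2 : (Σ k : ℕ, Fin (2 ^ (k + 1))) → ℕ := fun p => 2 ^ (p.1 + 1) + p.2 - 2 with hg2
  have hbig : ∀ k : ℕ, 2 ≤ 2 ^ (k + 1) := fun k => by
    calc 2 = 2 ^ 1 := rfl
    _ ≤ 2 ^ (k + 1) := Nat.pow_le_pow_right (by norm_num) (by omega)
  have hginj : Function.Injective g2 := by
    rintro ⟨k, j⟩ ⟨k', j'⟩ h
    simp only [hg2] at h
    have h2 : 2 ^ (k + 1) + (j : ℕ) = 2 ^ (k' + 1) + (j' : ℕ) := by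
      have := hbig k; have := hbig k'; omega
    have hlk := log17 k j j.isLt
    have hlk' := log17 k' j' j'.isLt
    rw [h2, hlk'] at hlk
    obtain rfl : k = k' := by omega
    exact congrArg (Sigma.mk k) (Fin.ext (by omega))
  have hrange : Function.support (fun n : ℕ => q ^ (Nat.log 2 (n + 2))) ⊆ Set.range g2 := by
    intro n _
    set m := n + 2 with hm
    set L := Nat.log 2 m with hL
    have hL1 : 0 < L := Nat.log_pos one_lt_two (by omega)
    have h1 : 2 ^ L ≤ m := Nat.pow_log_le_self 2 (by omega)
    have h2 : m < 2 ^ (L + 1) := Nat.lt_pow_succ_log_self one_lt_two m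
    have hE : L - 1 + 1 = L := by omega
    refine ⟨⟨L - 1, ⟨m - 2 ^ L, ?_⟩⟩, ?_⟩
    · rw [hE]; omega
    · simp only [hg2, hE]; omega
  have step1 : ∑' p : (Σ k : ℕ, Fin (2 ^ (k + 1))),
      q ^ (Nat.log 2 (g2 p + 2)) = ∑' n : ℕ, q ^ (Nat.log 2 (n + 2)) :=
    hginj.tsum_eq hrange
  rw [← step1]
  have step2 : ∀ p : (Σ k : ℕ, Fin (2 ^ (k + 1))),
      q ^ (Nat.log 2 (g2 p + 2)) = q ^ (p.1 + 1) := by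
    rintro ⟨k, j⟩
    have := hbig k
    have hval : g2 ⟨k, j⟩ + 2 = 2 ^ (k + 1) + (j : ℕ) := by simp only [hg2]; omega
    rw [hval, log17 k j j.isLt]
  rw [tsum_congr step2, ENNReal.tsum_sigma']
  have step3 : ∀ k : ℕ, ∑' _ : Fin (2 ^ (k + 1)), q ^ (k + 1) = ((2 : ENNReal)⁻¹) ^ (k + 1) := by
    intro k
    rw [tsum_fintype]
    simp only [Finset.sum_const, Finset.card_univ, Fintype.card_fin, nsmul_eq_mul]
    rw [Nat.cast_pow, Nat.cast_ofNat, ← mul_pow, hq, two_mul_qinv17]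
  rw [tsum_congr step3]
  exact geo_sum17

lemma fC17_eq_one : fC C17 (Real.log 4) = 1 := by
  set q : ENNReal := (4 : ENNReal)⁻¹ with hq
  have h1 : fC C17 (Real.log 4) =
      ∑' k : ℕ, ((Cwords C17 (k + 1)).ncard : ENNReal) * q ^ (k + 1) := by
    unfold fC
    exact tsum_congr fun k => by rw [exp_term17 k]
  set T : ℕ → ENNReal := fun k => ((Cwords C17 (k + 1)).ncard : ENNReal) * q ^ (k + 1) with hT
  set g1 : ℕ → ℕ := fun n => (n + 2) + Nat.log 2 (n + 2) - 1 with hg1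
  have hginj : Function.Injective g1 := by
    intro a b h
    simp only [hg1] at h
    have ha : (a + 2) + Nat.log 2 (a + 2) = (b + 2) + Nat.log 2 (b + 2) := by omega
    have := gmono17.injective ha
    omega
  have hrange : Function.support T ⊆ Set.range g1 := by
    intro k hk
    by_contra hr
    apply hk
    have hemp : Cwords C17 (k + 1) = ∅ := by
      refine cwords17_empty (k + 1) fun n hn hnk => ?_
      obtain ⟨m, rfl⟩ : ∃ m, n = m + 2 := ⟨n - 2, by omega⟩
      exact hr ⟨m, by simp only [hg1]; omega⟩
    simp [hT, hemp]
  have step1 : ∑' n : ℕ, T (g1 n) = ∑' k : ℕ, T k := hginj.tsum_eq hrange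
  have step2 : ∀ n : ℕ, T (g1 n) = q ^ (Nat.log 2 (n + 2)) := by
    intro n
    have hk1 : g1 n + 1 = (n + 2) + Nat.log 2 (n + 2) := by simp only [hg1]; omega
    rw [hT]
    simp only []
    rw [hk1, cwords17_card (n + 2) (by omega), Nat.cast_pow, Nat.cast_ofNat, hq,
      pow_add (4 : ENNReal)⁻¹ (n + 2) (Nat.log 2 (n + 2)), ← mul_assoc, pow_mul_inv_pow17, one_mul]
  rw [h1, ← step1, tsum_congr step2, sum_q_log17]

lemma harm17_top : ∑' n : ℕ, ENNReal.ofReal (1 / ((n : ℝ) + 2)) = ⊤ := by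
  by_contra h
  have h1 : Summable (fun n : ℕ => (1 / ((n : ℝ) + 2)).toNNReal) :=
    ENNReal.tsum_coe_ne_top_iff_summable.mp (by simpa [ENNReal.ofReal] using h)
  have h2 : Summable (fun n : ℕ => 1 / ((n : ℝ) + 2)) := by
    have := NNReal.summable_coe.mpr h1
    refine this.congr fun n => ?_
    rw [Real.coe_toNNReal]
    positivity
  have h3 : Summable (fun n : ℕ => 1 / ((n : ℝ))) := by
    rw [← summable_nat_add_iff 2]
    refine h2.congr fun n => by push_cast; ring
  exact Real.not_summable_one_div_natCast h3

lemma term_ge17 (n : ℕ) :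
    1 / ((n : ℝ) + 2) ≤
      (((n : ℝ) + 2) + (Nat.log 2 (n + 2) : ℝ)) * 4 ^ (n + 2) / 4 ^ (n + 2 + Nat.log 2 (n + 2)) := by
  set L := Nat.log 2 (n + 2) with hL
  set m : ℝ := (n : ℝ) + 2 with hm
  have hmpos : (0 : ℝ) < m := by positivity
  have h2L : (2 : ℝ) ^ L ≤ m := by
    have h := Nat.pow_log_le_self 2 (show n + 2 ≠ 0 by omega)
    rw [hm, hL]
    calc (2:ℝ) ^ Nat.log 2 (n+2) = ((2 ^ Nat.log 2 (n+2) : ℕ) : ℝ) := by push_cast; ring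
    _ ≤ ((n + 2 : ℕ) : ℝ) := by exact_mod_cast h
    _ = (n : ℝ) + 2 := by push_cast; ring
  have h4L : (4 : ℝ) ^ L ≤ m ^ 2 := by
    have h : (4 : ℝ) ^ L = ((2 : ℝ) ^ L) ^ 2 := by
      rw [← pow_mul, mul_comm L 2, pow_mul]; norm_num
    rw [h]
    have h2pos : (0 : ℝ) ≤ (2 : ℝ) ^ L := by positivity
    nlinarith
  have hsplit : (4 : ℝ) ^ (n + 2 + L) = 4 ^ (n + 2) * 4 ^ L := pow_add 4 (n + 2) L
  rw [hsplit]
  have h4n : (0 : ℝ) < 4 ^ (n + 2) := by positivity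
  have h4Lpos : (0 : ℝ) < 4 ^ L := by positivity
  have hLnn : (0 : ℝ) ≤ (L : ℝ) := Nat.cast_nonneg L
  rw [div_le_div_iff₀ hmpos (by positivity)]
  calc 1 * (4 ^ (n + 2) * 4 ^ L) = 4 ^ (n + 2) * 4 ^ L := by ring
  _ ≤ 4 ^ (n + 2) * (m * (m + L)) := by
      apply mul_le_mul_of_nonneg_left _ h4n.le
      nlinarith
  _ = (m + (L : ℝ)) * 4 ^ (n + 2) * m := by ring

end Aux17

/-- `f_C(ln 4) = ∑_{n≥2} 4ⁿ·4^{-(n+⌊log₂ n⌋)} = 1`, while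
`∑_{n≥2} (n+⌊log₂ n⌋)·4ⁿ·4^{-(n+⌊log₂ n⌋)} = ∞` (null recurrence). -/
theorem stmt17 :
    fC C17 (Real.log 4) = 1 ∧
    ∑' n : ℕ, ENNReal.ofReal
      ((((n : ℝ) + 2) + (Nat.log 2 (n + 2) : ℝ)) * 4 ^ (n + 2) /
        4 ^ (n + 2 + Nat.log 2 (n + 2))) = ⊤ := by
  constructor
  · exact fC17_eq_one
  · refine top_unique (le_trans (le_of_eq harm17_top.symm) (ENNReal.tsum_le_tsum fun n => ?_))
    exact ENNReal.ofReal_le_ofReal (term_ge17 n)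
end
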